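/- arXiv:1604.01176 — 13 statements merged into one kernel-verified Lean document; each statement's English description precedes it below -/
import Mathlib

section
/- If a commutative unital ring R has unitary M-stable rank n < ∞, then for every m ≥ n and every invertible (m+1)-tuple (f, g) ∈ R^{m+1}, there exists an invertible m-tuple u ∈ U_m(R) such that f + u·g (componentwise f_j + u_j g) is an invertible m-tuple. -/
/-- Bass `k`-stability: every unimodular `(k+1)`-tuple `(a, b)` is reducible. -/
def Bs (R : Type*) [CommRing R] (k : ℕ) : Prop :=
  ∀ (a : Fin k → R) (b : R), (∃ (x : Fin k → R) (y : R), ∑ j, x j * a j + y * b = 1) →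
    ∃ (u z : Fin k → R), ∑ j, z j * (a j + u j * b) = 1

theorem Bs.succ {R : Type*} [CommRing R] {k : ℕ} (h : Bs R k) : Bs R (k + 1) := by
  rintro a b ⟨x, y, hxy⟩
  rw [Fin.sum_univ_castSucc] at hxy
  obtain ⟨e, z, hez⟩ := h (fun j => a j.castSucc)
      (x (Fin.last k) * a (Fin.last k) + y * b)
    ⟨fun j => x j.castSucc, 1, by linear_combination hxy⟩
  have hez' : (∑ j, z j * (a j.castSucc + e j * y * b))
      + (∑ j, z j * e j) * (x (Fin.last k) * a (Fin.last k)) = 1 := by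
    rw [Finset.sum_mul, ← Finset.sum_add_distrib, ← hez]
    exact Finset.sum_congr rfl fun j _ => by ring
  refine ⟨Fin.snoc (fun j => e j * y) 0,
    Fin.snoc z (x (Fin.last k) * ∑ j, z j * e j), ?_⟩
  rw [Fin.sum_univ_castSucc]
  simp only [Fin.snoc_castSucc, Fin.snoc_last]
  linear_combination hez'

theorem Bs.rel {R : Type*} [CommRing R] {k : ℕ} (hk : Bs R k) (hk1 : Bs R (k + 1))
    (h : R) (a : Fin k → R) (b : R)
    (hab : ∃ (x : Fin k → R) (y c : R), ∑ j, x j * a j + y * b + c * h = 1) :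
    ∃ (u z : Fin k → R) (c : R), ∑ j, z j * (a j + u j * b) + c * h = 1 := by
  obtain ⟨x, y, c, hx⟩ := hab
  obtain ⟨U, Z, hUZ⟩ := hk1 (Fin.snoc a b) h
    ⟨Fin.snoc x y, c, by
      rw [Fin.sum_univ_castSucc]
      simp only [Fin.snoc_castSucc, Fin.snoc_last]
      linear_combination hx⟩
  rw [Fin.sum_univ_castSucc] at hUZ
  simp only [Fin.snoc_castSucc, Fin.snoc_last] at hUZ
  obtain ⟨u, z, huz⟩ := hk (fun j => a j + U j.castSucc * h) (b + U (Fin.last k) * h)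
    ⟨fun j => Z j.castSucc, Z (Fin.last k), by linear_combination hUZ⟩
  refine ⟨u, z, ∑ j, z j * (U j.castSucc + u j * U (Fin.last k)), ?_⟩
  rw [Finset.sum_mul, ← Finset.sum_add_distrib, ← huz]
  exact Finset.sum_congr rfl fun j _ => by ring

/-- If a commutative unital ring `R` has unitary M-stable rank `n`, then for every `m ≥ n`
and every invertible `(m+1)`-tuple `(f, g)`, there is an invertible `m`-tuple `u` with
`f + u·g` invertible. -/
theorem stmt1 (R : Type*) [CommRing R] (n : ℕ)
    (husr : ∀ (a : Fin n → R) (b : R),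
      (∃ (x : Fin n → R) (y : R), ∑ j, x j * a j + y * b = 1) →
      ∃ u : Fin n → R, (∃ w : Fin n → R, ∑ j, w j * u j = 1) ∧
        (∃ x : Fin n → R, ∑ j, x j * (a j + u j * b) = 1))
    (m : ℕ) (hm : n ≤ m) (f : Fin m → R) (g : R)
    (hfg : ∃ (x : Fin m → R) (y : R), ∑ j, x j * f j + y * g = 1) :
    ∃ u : Fin m → R, (∃ w : Fin m → R, ∑ j, w j * u j = 1) ∧
      (∃ x : Fin m → R, ∑ j, x j * (f j + u j * g) = 1) := by
  rcases hm.eq_or_lt with rfl | hlt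
  · exact husr f g hfg
  · obtain ⟨k, rfl⟩ : ∃ k, m = k + 1 :=
      ⟨m - 1, (Nat.succ_pred_eq_of_pos (lt_of_le_of_lt (Nat.zero_le n) hlt)).symm⟩
    have hnk : n ≤ k := Nat.lt_succ_iff.mp hlt
    have bsn : Bs R n := by
      rintro a b hab
      obtain ⟨u, -, x', hx'⟩ := husr a b hab
      exact ⟨u, x', hx'⟩
    have key : ∀ d, Bs R (n + d) := by
      intro d
      induction d with
      | zero => exact bsn
      | succ d ih => exact ih.succ
    have bsk : Bs R k := by
      have := key (k - n)
      rwa [Nat.add_sub_cancel' hnk] at this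
    obtain ⟨x, y, hxy⟩ := hfg
    rw [Fin.sum_univ_castSucc] at hxy
    obtain ⟨u, z, c, huz⟩ := bsk.rel bsk.succ (f (Fin.last k) + g)
      (fun j => f j.castSucc) g
      ⟨fun j => x j.castSucc, y - x (Fin.last k), x (Fin.last k), by linear_combination hxy⟩
    refine ⟨Fin.snoc u 1, ⟨Fin.snoc 0 1, ?_⟩, ⟨Fin.snoc z c, ?_⟩⟩
    · rw [Fin.sum_univ_castSucc]
      simp
    · rw [Fin.sum_univ_castSucc]
      simp only [Fin.snoc_castSucc, Fin.snoc_last]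
      linear_combination huz
end

section
/- For any commutative unital ring R, the unitary M-stable rank satisfies bsr R ≤ usr R ≤ bsr R + 1, where bsr denotes the Bass stable rank. -/
/-- An `n`-tuple over a commutative ring is unimodular (invertible) if it generates
the unit ideal. -/
def IsUnimodular {R : Type*} [CommRing R] {n : ℕ} (f : Fin n → R) : Prop :=
  ∃ x : Fin n → R, ∑ j, x j * f j = 1

/-- The defining property of Bass stable rank at level `n`. -/
def BsrProp (R : Type*) [CommRing R] (n : ℕ) : Prop :=
  ∀ (f : Fin n → R) (g : R), IsUnimodular (Fin.snoc f g) →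
    ∃ x : Fin n → R, IsUnimodular (fun j => f j + x j * g)

/-- The defining property of the unitary M-stable rank at level `n`: the reducing tuple
can be chosen unimodular. -/
def UsrProp (R : Type*) [CommRing R] (n : ℕ) : Prop :=
  ∀ (f : Fin n → R) (g : R), IsUnimodular (Fin.snoc f g) →
    ∃ u : Fin n → R, IsUnimodular u ∧ IsUnimodular (fun j => f j + u j * g)

/-- The Bass stable rank of `R` (as an extended natural number). -/
noncomputable def bsr (R : Type*) [CommRing R] : ℕ∞ :=
  sInf {c : ℕ∞ | ∃ n : ℕ, c = n ∧ BsrProp R n}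

/-- The unitary M-stable rank of `R` (as an extended natural number). -/
noncomputable def usr (R : Type*) [CommRing R] : ℕ∞ :=
  sInf {c : ℕ∞ | ∃ n : ℕ, c = n ∧ UsrProp R n}

lemma snoc_unimodular_iff {R : Type*} [CommRing R] {n : ℕ} (f : Fin n → R) (g : R) :
    IsUnimodular (Fin.snoc f g) ↔ ∃ (x : Fin n → R) (y : R),
      ∑ i, x i * f i + y * g = 1 := by
  constructor
  · rintro ⟨x, hx⟩
    refine ⟨fun i => x i.castSucc, x (Fin.last n), ?_⟩
    rw [Fin.sum_univ_castSucc] at hx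
    simpa using hx
  · rintro ⟨x, y, hxy⟩
    refine ⟨Fin.snoc x y, ?_⟩
    rw [Fin.sum_univ_castSucc]
    simpa using hxy

lemma bsrProp_succ {R : Type*} [CommRing R] {n : ℕ} (h : BsrProp R n) :
    BsrProp R (n + 1) := by
  intro f g hfg
  rw [snoc_unimodular_iff] at hfg
  obtain ⟨x, y, hxy⟩ := hfg
  rw [Fin.sum_univ_castSucc] at hxy
  set g' : R := x (Fin.last n) * f (Fin.last n) + y * g with hg'
  have hun : IsUnimodular (Fin.snoc (fun i : Fin n => f i.castSucc) g') := by
    rw [snoc_unimodular_iff]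
    exact ⟨fun i => x i.castSucc, 1, by rw [hg']; ring_nf; ring_nf at hxy; linear_combination hxy⟩
  obtain ⟨c, d, hd⟩ := h _ _ hun
  refine ⟨Fin.snoc (fun i => c i * y) 0, ?_⟩
  refine ⟨Fin.snoc d (∑ i, d i * (c i * x (Fin.last n))), ?_⟩
  rw [Fin.sum_univ_castSucc]
  simp only [Fin.snoc_castSucc, Fin.snoc_last]
  rw [Finset.sum_mul]
  rw [← Finset.sum_add_distrib]
  rw [← hd]
  apply Finset.sum_congr rfl
  intro i _
  rw [hg']
  ring

lemma usrProp_of_bsr {R : Type*} [CommRing R] {n : ℕ} (h : BsrProp R n) :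
    UsrProp R (n + 1) := by
  have h1 : BsrProp R (n + 1) := bsrProp_succ h
  intro f g hfg
  rw [snoc_unimodular_iff] at hfg
  obtain ⟨x, y, hxy⟩ := hfg
  rw [Fin.sum_univ_castSucc] at hxy
  set hh : R := f (Fin.last n) + g with hhh
  -- the row (f₀,...,f_{n-1}, g) together with hh is unimodular
  have hun : IsUnimodular (Fin.snoc (Fin.snoc (fun i : Fin n => f i.castSucc) g) hh) := by
    rw [snoc_unimodular_iff]
    refine ⟨Fin.snoc (fun i => x i.castSucc) (y - x (Fin.last n)), x (Fin.last n), ?_⟩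
    rw [Fin.sum_univ_castSucc]
    simp only [Fin.snoc_castSucc, Fin.snoc_last, hhh]
    ring_nf
    ring_nf at hxy
    linear_combination hxy
  obtain ⟨c, hc⟩ := h1 _ _ hun
  have hc' : IsUnimodular (Fin.snoc
      (fun i : Fin n => f i.castSucc + c i.castSucc * hh) (g + c (Fin.last n) * hh)) := by
    convert hc using 1
    funext j
    refine Fin.lastCases ?_ (fun i => ?_) j <;> simp
  obtain ⟨e, d, hd⟩ : ∃ (e : Fin n → R) (d : Fin n → R),
      ∑ i, d i * (f i.castSucc + c i.castSucc * hh + e i * (g + c (Fin.last n) * hh)) = 1 := by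
    obtain ⟨e, d, hd⟩ := h _ _ hc'
    exact ⟨e, d, hd⟩
  refine ⟨Fin.snoc e 1, ⟨Fin.snoc 0 1, by rw [Fin.sum_univ_castSucc]; simp⟩, ?_⟩
  refine ⟨Fin.snoc d (∑ i, d i * (c i.castSucc + e i * c (Fin.last n))), ?_⟩
  rw [Fin.sum_univ_castSucc]
  simp only [Fin.snoc_castSucc, Fin.snoc_last, one_mul]
  rw [Finset.sum_mul, ← Finset.sum_add_distrib, ← hd]
  apply Finset.sum_congr rfl
  intro i _
  rw [hhh]
  ring

/-- `bsr R ≤ usr R ≤ bsr R + 1`. -/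
theorem stmt2 (R : Type*) [CommRing R] : bsr R ≤ usr R ∧ usr R ≤ bsr R + 1 := by
  constructor
  · apply sInf_le_sInf
    rintro c ⟨n, rfl, hn⟩
    refine ⟨n, rfl, ?_⟩
    intro f g hfg
    obtain ⟨u, _, hu⟩ := hn f g hfg
    exact ⟨u, hu⟩
  · by_cases hex : ∃ n, BsrProp R n
    · classical
      set n₀ := Nat.find hex with hn₀
      have hP : BsrProp R n₀ := Nat.find_spec hex
      have h1 : usr R ≤ ((n₀ + 1 : ℕ) : ℕ∞) :=
        sInf_le ⟨n₀ + 1, rfl, usrProp_of_bsr hP⟩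
      have h2 : ((n₀ : ℕ) : ℕ∞) ≤ bsr R := by
        apply le_sInf
        rintro c ⟨m, rfl, hm⟩
        exact_mod_cast Nat.find_min' hex hm
      calc usr R ≤ ((n₀ + 1 : ℕ) : ℕ∞) := h1
        _ = ((n₀ : ℕ) : ℕ∞) + 1 := by push_cast; ring
        _ ≤ bsr R + 1 := add_le_add_left h2 1
    · have hempty : {c : ℕ∞ | ∃ n : ℕ, c = n ∧ BsrProp R n} = ∅ := by
        ext c
        simp only [Set.mem_setOf_eq, Set.mem_empty_iff_false, iff_false]
        rintro ⟨n, _, hn⟩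
        exact hex ⟨n, hn⟩
      have : bsr R = ⊤ := by rw [bsr, hempty, sInf_empty]
      rw [this, top_add]
      exact le_top
end

section
/- Let A be a commutative unital topological algebra in which the set of invertible elements A⁻¹ is open (a Q-algebra). Then usr A ≤ tsr A: if the set of invertible n-tuples U_n(A) is dense in Aⁿ, then for every invertible (n+1)-tuple (a, b) ∈ Aⁿ × A there exists w ∈ U_n(A) such that a + w·b ∈ U_n(A). -/
/-- For a commutative unital topological algebra `A` with open group of units (a Q-algebra):
if the invertible `n`-tuples are dense in `Aⁿ` (i.e. `tsr A ≤ n`), then every invertible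
`(n+1)`-tuple `(a, b)` admits a unimodular `w` with `a + w·b` unimodular (`usr A ≤ tsr A`). -/
theorem stmt3 (𝕜 : Type*) [RCLike 𝕜] (A : Type*) [CommRing A] [Algebra 𝕜 A]
    [TopologicalSpace A] [IsTopologicalRing A]
    (hQ : IsOpen {a : A | IsUnit a}) (n : ℕ)
    (htsr : Dense {f : Fin n → A | ∃ x : Fin n → A, ∑ j, x j * f j = 1})
    (a : Fin n → A) (b : A)
    (hab : ∃ (x : Fin n → A) (y : A), ∑ j, x j * a j + y * b = 1) :
    ∃ w : Fin n → A, (∃ x : Fin n → A, ∑ j, x j * w j = 1) ∧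
      (∃ x : Fin n → A, ∑ j, x j * (a j + w j * b) = 1) := by
  obtain ⟨x, y, hxy⟩ := hab
  -- Step 1: perturb x to a unimodular x' keeping ∑ x' a + y b invertible
  have hc1 : Continuous (fun x' : Fin n → A => ∑ j, x' j * a j + y * b) := by
    exact (continuous_finset_sum _ fun j _ =>
      (continuous_apply j).mul continuous_const).add continuous_const
  have hopen1 : IsOpen {x' : Fin n → A | IsUnit (∑ j, x' j * a j + y * b)} :=
    hQ.preimage hc1
  obtain ⟨x', hx'o, hx'U⟩ := htsr.inter_open_nonempty _ hopen1
    ⟨x, by simp only [Set.mem_setOf_eq, hxy]; exact isUnit_one⟩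
  obtain ⟨u, hu⟩ := hx'o
  obtain ⟨s, hs⟩ := hx'U
  -- Step 2: w' j = y * s j gives a + w' b unimodular with witness z = u⁻¹ • x'
  set z : Fin n → A := fun j => ↑u⁻¹ * x' j with hz
  have hkey : ∑ j, z j * (a j + y * s j * b) = 1 := by
    calc ∑ j, z j * (a j + y * s j * b)
        = ↑u⁻¹ * (∑ j, x' j * a j) + ↑u⁻¹ * y * b * ∑ j, s j * x' j := by
          rw [Finset.mul_sum, Finset.mul_sum, ← Finset.sum_add_distrib]
          exact Finset.sum_congr rfl fun j _ => by simp only [hz]; ring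
      _ = ↑u⁻¹ * (∑ j, x' j * a j + y * b) := by rw [hs]; ring
      _ = 1 := by rw [← hu]; exact u.inv_mul
  -- Step 3: perturb w' within the open set {w | ∑ z (a + w b) unit} to unimodular w
  have hc2 : Continuous (fun w : Fin n → A => ∑ j, z j * (a j + w j * b)) := by
    exact continuous_finset_sum _ fun j _ =>
      continuous_const.mul ((continuous_const.add ((continuous_apply j).mul continuous_const)))
  have hopen2 : IsOpen {w : Fin n → A | IsUnit (∑ j, z j * (a j + w j * b))} :=
    hQ.preimage hc2
  obtain ⟨w, hwo, hwU⟩ := htsr.inter_open_nonempty _ hopen2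
    ⟨fun j => y * s j, by simp only [Set.mem_setOf_eq, hkey]; exact isUnit_one⟩
  obtain ⟨v, hv⟩ := hwo
  refine ⟨w, hwU, fun j => ↑v⁻¹ * z j, ?_⟩
  calc ∑ j, (↑v⁻¹ * z j) * (a j + w j * b)
      = ↑v⁻¹ * ∑ j, z j * (a j + w j * b) := by
        rw [Finset.mul_sum]; exact Finset.sum_congr rfl fun j _ => by ring
    _ = 1 := by rw [← hv]; exact v.inv_mul
end

section
/- Let A be a normed commutative unital algebra whose group of units is open and has continuous inversion (a normed cQ-algebra). If the norm-one rank of A is n < ∞, then the small-norm rank of A is at most n: for every ε > 0 and every invertible (n+1)-tuple (a, g) ∈ Aⁿ × A, there exists x ∈ Aⁿ with ‖x_j‖ < ε for all j such that a + x·g ∈ U_n(A). -/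
/-- For a normed commutative unital cQ-algebra `A` (open unit group, continuous inversion):
if `A` has norm-one rank `n`, then its small-norm rank is at most `n`. -/
theorem stmt4 (𝕜 : Type*) [RCLike 𝕜] (A : Type*) [NormedCommRing A] [NormedAlgebra 𝕜 A]
    (hQ : IsOpen {a : A | IsUnit a})
    (hinv : ContinuousOn (fun a : A => Ring.inverse a) {a : A | IsUnit a})
    (n : ℕ)
    (hnor : ∀ (f : Fin n → A) (g : A),
      (∃ (x : Fin n → A) (y : A), ∑ j, x j * f j + y * g = 1) →
      ∃ c : Fin n → A, (∀ j, ‖c j‖ = 1) ∧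
        ∃ x : Fin n → A, ∑ j, x j * (f j + c j * g) = 1)
    (ε : ℝ) (hε : 0 < ε) (a : Fin n → A) (g : A)
    (hag : ∃ (x : Fin n → A) (y : A), ∑ j, x j * a j + y * g = 1) :
    ∃ x : Fin n → A, (∀ j, ‖x j‖ < ε) ∧
      ∃ y : Fin n → A, ∑ j, y j * (a j + x j * g) = 1 := by
  set δ : 𝕜 := ((ε / 2 : ℝ) : 𝕜) with hδ
  have hδ0 : δ ≠ 0 := by
    simp only [hδ, ne_eq, RCLike.ofReal_eq_zero]
    positivity
  obtain ⟨x₀, y₀, hxy⟩ := hag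
  have hinv' : ∃ (x : Fin n → A) (y : A), ∑ j, x j * a j + y * (δ • g) = 1 := by
    refine ⟨x₀, δ⁻¹ • y₀, ?_⟩
    rw [mul_smul_comm, smul_mul_assoc, smul_smul, mul_inv_cancel₀ hδ0, one_smul]
    exact hxy
  obtain ⟨c, hc1, x, hx⟩ := hnor a (δ • g) hinv'
  refine ⟨fun j => δ • c j, fun j => ?_, x, ?_⟩
  · rw [norm_smul, hc1 j, mul_one, hδ, RCLike.norm_ofReal, abs_of_pos (by positivity)]
    linarith
  · convert hx using 3 with j
    rw [smul_mul_assoc, mul_smul_comm]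
end

section
/- Let A be a normed commutative unital algebra with open unit group (a normed Q-algebra). If the small-norm rank of A is n < ∞, then the all-units rank of A is at most n: every invertible (n+1)-tuple (f, g) ∈ Aⁿ × A admits invertible elements u₁, ..., uₙ ∈ A⁻¹ such that (f₁ + u₁g, ..., fₙ + uₙg) ∈ U_n(A). -/
/-- For a normed commutative unital Q-algebra `A` (open unit group): if `A` has small-norm
rank `n`, then its all-units rank is at most `n`: every invertible `(n+1)`-tuple `(f, g)`
admits units `u₁, …, uₙ ∈ A⁻¹` with `f + u·g` unimodular. -/
theorem stmt5 (𝕜 : Type*) [RCLike 𝕜] (A : Type*) [NormedCommRing A] [NormedAlgebra 𝕜 A]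
    (hQ : IsOpen {a : A | IsUnit a})
    (n : ℕ)
    (hsnr : ∀ (ε : ℝ), 0 < ε → ∀ (f : Fin n → A) (g : A),
      (∃ (x : Fin n → A) (y : A), ∑ j, x j * f j + y * g = 1) →
      ∃ x : Fin n → A, (∀ j, ‖x j‖ < ε) ∧
        ∃ y : Fin n → A, ∑ j, y j * (f j + x j * g) = 1)
    (f : Fin n → A) (g : A)
    (hfg : ∃ (x : Fin n → A) (y : A), ∑ j, x j * f j + y * g = 1) :
    ∃ u : Fin n → A, (∀ j, IsUnit (u j)) ∧
      ∃ y : Fin n → A, ∑ j, y j * (f j + u j * g) = 1 := by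
  obtain ⟨ε, hε, hball⟩ := Metric.isOpen_iff.mp hQ 1 isUnit_one
  obtain ⟨x, y, hxy⟩ := hfg
  have h' : ∃ (x : Fin n → A) (y : A), ∑ j, x j * (f j + g) + y * g = 1 := by
    refine ⟨x, y - ∑ j, x j, ?_⟩
    simp only [mul_add, Finset.sum_add_distrib, sub_mul, Finset.sum_mul]
    ring_nf
    ring_nf at hxy
    linear_combination hxy
  obtain ⟨x', hx', y', hy'⟩ := hsnr ε hε (fun j => f j + g) g h'
  refine ⟨fun j => 1 + x' j, fun j => ?_, y', ?_⟩
  · apply hball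
    simp only [Metric.mem_ball, dist_eq_norm, add_sub_cancel_left]
    exact hx' j
  · calc ∑ j, y' j * (f j + (1 + x' j) * g)
        = ∑ j, y' j * (f j + g + x' j * g) := Finset.sum_congr rfl fun j _ => by ring
      _ = 1 := hy'
end

section
/- Let X be a compact Hausdorff space and A = C(X, 𝕂) with 𝕂 = ℝ or ℂ. If tsr A = 1 (i.e., invertible elements are dense in A), then for every pair (f, g) ∈ A² with no common zero, there exists c ∈ A with ‖c‖_∞ = 1 such that f + c·g has no zero on X. -/
open Set

/-- For `A = C(X, 𝕜)` with `X` compact Hausdorff and `tsr A = 1` (nowhere-vanishing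
functions dense): every pair `(f, g)` with no common zero is norm-one reducible. -/
theorem stmt7 (𝕜 : Type*) [RCLike 𝕜] (X : Type*) [TopologicalSpace X] [CompactSpace X]
    [T2Space X] [Nonempty X]
    (htsr : Dense {h : C(X, 𝕜) | ∀ x : X, h x ≠ 0})
    (f g : C(X, 𝕜)) (hfg : ∀ x : X, f x ≠ 0 ∨ g x ≠ 0) :
    ∃ c : C(X, 𝕜), ‖c‖ = 1 ∧ ∀ x : X, (f + c * g) x ≠ 0 := by
  by_cases hg : ∀ x : X, g x ≠ 0
  · -- Case B : g nowhere vanishing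
    set h : C(X, 𝕜) := ⟨fun x => -f x / g x,
      ((map_continuous f).neg.div (map_continuous g) hg)⟩ with hh
    obtain ⟨v, hv, hvd⟩ := htsr.exists_dist_lt (-h) one_pos
    obtain ⟨x₂, -, hx₂'⟩ := isCompact_univ.exists_isMinOn univ_nonempty
      ((map_continuous v).norm.continuousOn)
    have hx₂ : ∀ y, ‖v x₂‖ ≤ ‖v y‖ := fun y => hx₂' (mem_univ y)
    have hμ : 0 < ‖v x₂‖ := norm_pos_iff.mpr (hv x₂)
    set μ := ‖v x₂‖ with hμdef
    set T : ℝ := max 1 ((‖h‖ + 2) / μ) with hT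
    have hT1 : (1:ℝ) ≤ T := le_max_left _ _
    have hψc : Continuous fun t : ℝ => ‖h + t • v‖ :=
      (continuous_const.add (continuous_id.smul continuous_const)).norm
    have hψ1 : ‖h + (1:ℝ) • v‖ < 1 := by
      have : dist (-h) v = ‖h + (1:ℝ) • v‖ := by
        rw [one_smul, dist_eq_norm, ← norm_neg]
        congr 1; abel
      rw [← this]; exact hvd
    have hψT : 1 ≤ ‖h + T • v‖ := by
      have h1 : ‖(h + T • v) x₂‖ ≤ ‖h + T • v‖ := ContinuousMap.norm_coe_le_norm _ _
      have h2 : ‖T • v x₂‖ - ‖h x₂‖ ≤ ‖(h + T • v) x₂‖ := by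
        have heq : (h + T • v) x₂ = T • v x₂ - -(h x₂) := by
          simp [sub_neg_eq_add, add_comm]
        rw [heq]
        calc ‖T • v x₂‖ - ‖h x₂‖ = ‖T • v x₂‖ - ‖-(h x₂)‖ := by rw [norm_neg]
          _ ≤ _ := norm_sub_norm_le _ _
      have h3 : ‖T • v x₂‖ = T * μ := by
        rw [norm_smul, Real.norm_eq_abs, abs_of_pos (lt_of_lt_of_le one_pos hT1)]
      have h4 : ‖h x₂‖ ≤ ‖h‖ := ContinuousMap.norm_coe_le_norm _ _
      have h5 : (‖h‖ + 2) / μ * μ = ‖h‖ + 2 := div_mul_cancel₀ _ hμ.ne'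
      have h6 : (‖h‖ + 2) / μ ≤ T := le_max_right _ _
      nlinarith [norm_nonneg h]
    obtain ⟨t, htmem, ht1⟩ := intermediate_value_Icc hT1 hψc.continuousOn ⟨hψ1.le, hψT⟩
    refine ⟨h + t • v, ht1, fun x => ?_⟩
    have hgx := hg x
    have key : (f + (h + t • v) * g) x = ((t:𝕜) * v x) * g x := by
      simp only [ContinuousMap.add_apply, ContinuousMap.mul_apply,
        ContinuousMap.smul_apply, hh, ContinuousMap.coe_mk,
        RCLike.real_smul_eq_coe_mul]
      field_simp
      ring
    rw [key]
    have ht0 : (t:𝕜) ≠ 0 := by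
      have : (1:ℝ) ≤ t := htmem.1
      simp only [ne_eq, RCLike.ofReal_eq_zero]
      linarith
    exact mul_ne_zero (mul_ne_zero ht0 (hv x)) hgx
  · -- Case A : g has a zero
    push_neg at hg
    obtain ⟨x₀, hgx₀⟩ := hg
    obtain ⟨xd, -, hxd'⟩ := isCompact_univ.exists_isMinOn univ_nonempty
      (((map_continuous f).norm.max (map_continuous g).norm).continuousOn)
    set d : ℝ := max ‖f xd‖ ‖g xd‖ with hddef
    have hdle : ∀ x, d ≤ max ‖f x‖ ‖g x‖ := fun x => hxd' (mem_univ x)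
    have hd : 0 < d := by
      rcases hfg xd with h' | h'
      · exact lt_of_lt_of_le (norm_pos_iff.mpr h') (le_max_left _ _)
      · exact lt_of_lt_of_le (norm_pos_iff.mpr h') (le_max_right _ _)
    obtain ⟨u, hu, hud⟩ := htsr.exists_dist_lt f (half_pos hd)
    have huf : ∀ x, ‖u x - f x‖ < d/2 := by
      intro x
      calc ‖u x - f x‖ = dist (f x) (u x) := by rw [dist_eq_norm, ← norm_neg]; congr 1; abel
        _ ≤ dist f u := ContinuousMap.dist_apply_le_dist x
        _ < d/2 := hud
    have hMpos : ∀ x : X, (0:ℝ) < max ‖g x‖ d := fun x => lt_of_lt_of_le hd (le_max_right _ _)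
    set c₀ : C(X, 𝕜) := ⟨fun x => (u x - f x) * (starRingEnd 𝕜) (g x) /
        ((max ‖g x‖ d : ℝ) : 𝕜)^2, by
      apply Continuous.div
      · exact ((map_continuous u).sub (map_continuous f)).mul
          (RCLike.continuous_conj.comp (map_continuous g))
      · exact (RCLike.continuous_ofReal.comp
          ((map_continuous g).norm.max continuous_const)).pow 2
      · intro x
        exact pow_ne_zero 2 (RCLike.ofReal_ne_zero.mpr (hMpos x).ne')⟩ with hc₀def
    have hc₀norm : ∀ x, ‖c₀ x‖ ≤ 1/2 := by
      intro x
      have hM := hMpos x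
      have hgM : ‖g x‖ ≤ max ‖g x‖ d := le_max_left _ _
      have h1 : ‖c₀ x‖ = ‖u x - f x‖ * ‖g x‖ / (max ‖g x‖ d)^2 := by
        simp [hc₀def, norm_div, norm_mul, norm_pow, RCLike.norm_conj, RCLike.norm_ofReal,
          abs_of_pos hM]
      rw [h1, div_le_iff₀ (by positivity)]
      have h2 : ‖u x - f x‖ ≤ d/2 := (huf x).le
      have h3 : d ≤ max ‖g x‖ d := le_max_right _ _
      nlinarith [norm_nonneg (u x - f x), norm_nonneg (g x)]
    set F : C(X, 𝕜) := f + c₀ * g with hF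
    have hFx : ∀ x, F x ≠ 0 := by
      intro x
      rcases le_or_gt d ‖g x‖ with hge | hlt
      · have hgx0 : g x ≠ 0 := norm_pos_iff.mp (lt_of_lt_of_le hd hge)
        have hMx : max ‖g x‖ d = ‖g x‖ := max_eq_left hge
        have hb : ((‖g x‖ : ℝ) : 𝕜)^2 ≠ 0 :=
          pow_ne_zero 2 (RCLike.ofReal_ne_zero.mpr (norm_ne_zero_iff.mpr hgx0))
        have hFu : F x = u x := by
          simp only [hF, ContinuousMap.add_apply, ContinuousMap.mul_apply, hc₀def,
            ContinuousMap.coe_mk, hMx]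
          rw [div_mul_eq_mul_div, mul_assoc, RCLike.conj_mul,
            mul_div_assoc, div_self hb, mul_one]
          ring
        rw [hFu]; exact hu x
      · have hfd : d ≤ ‖f x‖ := by
          by_contra hcon
          push_neg at hcon
          have := max_lt hcon hlt
          linarith [hdle x]
        intro h0
        have h0' : f x + c₀ x * g x = 0 := by
          simpa [hF, ContinuousMap.add_apply, ContinuousMap.mul_apply] using h0
        have h2 : f x = -(c₀ x * g x) := eq_neg_of_add_eq_zero_left h0'
        have h3 : ‖f x‖ ≤ (1/2) * ‖g x‖ := by
          rw [h2, norm_neg, norm_mul]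
          exact mul_le_mul_of_nonneg_right (hc₀norm x) (norm_nonneg _)
        linarith
    obtain ⟨x₁, -, hx₁'⟩ := isCompact_univ.exists_isMinOn univ_nonempty
      ((map_continuous F).norm.continuousOn)
    set m : ℝ := ‖F x₁‖ with hmdef
    have hm0 : 0 < m := norm_pos_iff.mpr (hFx x₁)
    have hmle : ∀ x, m ≤ ‖F x‖ := fun x => hx₁' (mem_univ x)
    have hK : IsClosed {x : X | m/4 ≤ ‖g x‖} :=
      isClosed_le continuous_const (map_continuous g).norm
    have hx₀K : x₀ ∉ {x : X | m/4 ≤ ‖g x‖} := by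
      simp only [mem_setOf_eq, hgx₀, norm_zero, not_le]
      linarith
    obtain ⟨ρ, hρ0, hρ1, hρmem⟩ := exists_continuous_zero_one_of_isClosed hK
      isClosed_singleton (Set.disjoint_singleton_right.mpr hx₀K)
    set ρ𝕜 : C(X, 𝕜) := ⟨fun x => ((ρ x : ℝ) : 𝕜),
      RCLike.continuous_ofReal.comp (map_continuous ρ)⟩ with hρ𝕜def
    have hρ𝕜norm : ∀ x, ‖ρ𝕜 x‖ = ρ x := by
      intro x
      simp [hρ𝕜def, RCLike.norm_ofReal, abs_of_nonneg (hρmem x).1]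
    have h1ρ : ∀ x : X, ‖(1:𝕜) - ρ𝕜 x‖ = 1 - ρ x := by
      intro x
      have : (1:𝕜) - ρ𝕜 x = ((1 - ρ x : ℝ) : 𝕜) := by
        simp [hρ𝕜def]
      rw [this, RCLike.norm_ofReal, abs_of_nonneg (by linarith [(hρmem x).2])]
    refine ⟨c₀ * (1 - ρ𝕜) + ρ𝕜, ?_, ?_⟩
    · apply le_antisymm
      · rw [ContinuousMap.norm_le _ zero_le_one]
        intro x
        have hx1 := (hρmem x).1
        have hx2 := (hρmem x).2
        have hb : ‖(c₀ * (1 - ρ𝕜) + ρ𝕜) x‖ ≤ ‖c₀ x‖ * ‖(1:𝕜) - ρ𝕜 x‖ + ‖ρ𝕜 x‖ := by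
          simp only [ContinuousMap.add_apply, ContinuousMap.mul_apply,
            ContinuousMap.sub_apply, ContinuousMap.one_apply]
          exact (norm_add_le _ _).trans (by rw [norm_mul])
        rw [h1ρ, hρ𝕜norm] at hb
        have := hc₀norm x
        nlinarith [norm_nonneg (c₀ x)]
      · have hρx₀ : ρ x₀ = 1 := hρ1 rfl
        have h1 : (c₀ * (1 - ρ𝕜) + ρ𝕜) x₀ = 1 := by
          simp [hρ𝕜def, hρx₀]
        calc (1:ℝ) = ‖(c₀ * (1 - ρ𝕜) + ρ𝕜) x₀‖ := by rw [h1, norm_one]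
          _ ≤ ‖c₀ * (1 - ρ𝕜) + ρ𝕜‖ := ContinuousMap.norm_coe_le_norm _ _
    · intro x
      have key : (f + (c₀ * (1 - ρ𝕜) + ρ𝕜) * g) x = F x + ρ𝕜 x * (1 - c₀ x) * g x := by
        simp only [hF, ContinuousMap.add_apply, ContinuousMap.mul_apply,
          ContinuousMap.sub_apply, ContinuousMap.one_apply]
        ring
      rw [key]
      rcases le_or_gt (m/4) ‖g x‖ with hge | hlt
      · have hz : ρ x = 0 := hρ0 hge
        have hz' : ρ𝕜 x = 0 := by simp [hρ𝕜def, hz]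
        simpa [hz'] using hFx x
      · intro h0
        have h2 : F x = -(ρ𝕜 x * (1 - c₀ x) * g x) := eq_neg_of_add_eq_zero_left h0
        have h3 : ‖F x‖ ≤ 1 * (3/2) * ‖g x‖ := by
          rw [h2, norm_neg, norm_mul, norm_mul]
          gcongr
          · rw [hρ𝕜norm]; exact (hρmem x).2
          · calc ‖(1:𝕜) - c₀ x‖ ≤ ‖(1:𝕜)‖ + ‖c₀ x‖ := norm_sub_le _ _
              _ ≤ 1 + 1/2 := by rw [norm_one]; linarith [hc₀norm x]
              _ = 3/2 := by norm_num
        have := hmle x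
        linarith
end

section
/- Let X be a compact Hausdorff space and A = C(X, 𝕂). If tsr A = n < ∞, then nor A ≤ n: for every invertible (n+1)-tuple (f, g) ∈ Aⁿ × A there exists v ∈ Aⁿ with ‖v_j‖_∞ = 1 for each j such that f + v·g is an invertible n-tuple (the functions f_j + v_j g have no common zero). -/
private lemma stmt8_case2 (𝕜 : Type*) [RCLike 𝕜] (X : Type*) [TopologicalSpace X] [CompactSpace X]
    [T2Space X] [Nonempty X] (n : ℕ)
    (f : Fin n → C(X, 𝕜)) (g : C(X, 𝕜))
    (hdense : ∀ ε : ℝ, 0 < ε → ∃ h : Fin n → C(X,𝕜),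
      (∀ x, ∃ j, h j x ≠ 0) ∧ ∀ j, ‖h j - f j‖ < ε)
    (hg : ∀ x, g x ≠ 0) :
    ∃ v : Fin n → C(X, 𝕜), (∀ j, ‖v j‖ = 1) ∧
      ∀ x : X, ∃ j, (f j + v j * g) x ≠ 0 := by
  classical
  obtain ⟨xm, -, hxm⟩ := isCompact_univ.exists_isMinOn Set.univ_nonempty
      (Continuous.continuousOn (by fun_prop : Continuous fun x : X => ‖g x‖))
  rw [isMinOn_iff] at hxm
  set μ := ‖g xm‖ with hμdef
  have hμ : 0 < μ := norm_pos_iff.mpr (hg xm)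
  have hμle : ∀ x : X, μ ≤ ‖g x‖ := fun x => hxm x trivial
  obtain ⟨h, hinv, hdist⟩ := hdense (μ/4) (by positivity)
  set h' : Fin n → C(X, 𝕜) := fun j =>
    if h j = 0 then ContinuousMap.const X ((μ/4 : ℝ) : 𝕜) else h j with hh'
  have hh'ne : ∀ j, h' j ≠ 0 := by
    intro j
    by_cases hj : h j = 0
    · simp only [hh', if_pos hj]
      intro hcontra
      have := ContinuousMap.congr_fun hcontra (Classical.arbitrary X)
      simp only [ContinuousMap.const_apply, ContinuousMap.zero_apply] at this
      exact RCLike.ofReal_ne_zero.mpr (by positivity) this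
    · simpa only [hh', if_neg hj] using hj
  have hh'dist : ∀ j, ‖h' j - f j‖ ≤ μ/2 := by
    intro j
    by_cases hj : h j = 0
    · simp only [hh', if_pos hj]
      have h1 : ‖f j‖ < μ/4 := by
        have := hdist j; rw [hj] at this; simpa using this
      have h2 : ‖ContinuousMap.const X ((μ/4 : ℝ) : 𝕜)‖ ≤ μ/4 := by
        rw [ContinuousMap.norm_le _ (by positivity)]
        intro x
        simp only [ContinuousMap.const_apply, RCLike.norm_ofReal]
        rw [abs_of_pos (by positivity)]
      calc ‖ContinuousMap.const X ((μ/4 : ℝ) : 𝕜) - f j‖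
          ≤ ‖ContinuousMap.const X ((μ/4 : ℝ) : 𝕜)‖ + ‖f j‖ := norm_sub_le _ _
        _ ≤ μ/2 := by linarith
    · simp only [hh', if_neg hj]
      linarith [hdist j]
  have hh'inv : ∀ x, ∃ j, h' j x ≠ 0 := by
    intro x
    obtain ⟨j, hj⟩ := hinv x
    refine ⟨j, ?_⟩
    have hjne : h j ≠ 0 := fun hc => hj (by rw [hc]; rfl)
    simpa only [hh', if_neg hjne] using hj
  -- inverse of g
  set ginv : C(X, 𝕜) := ⟨fun x => (g x)⁻¹, (map_continuous g).inv₀ hg⟩ with hginv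
  have hginvnorm : ‖ginv‖ ≤ μ⁻¹ := by
    rw [ContinuousMap.norm_le _ (by positivity)]
    intro x
    simp only [hginv, ContinuousMap.coe_mk, norm_inv]
    exact inv_anti₀ hμ (hμle x)
  -- the norm function
  have hNcont : ∀ j, Continuous fun s : ℝ => ‖((1+s) • h' j - f j) * ginv‖ := by
    intro j
    apply Continuous.norm
    exact (((continuous_const.add continuous_id).smul continuous_const).sub
      continuous_const).mul continuous_const
  have hN0 : ∀ j, ‖((1+(0:ℝ)) • h' j - f j) * ginv‖ ≤ 1 := by
    intro j
    have : ((1+(0:ℝ)) • h' j - f j) = h' j - f j := by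
      rw [add_zero, one_smul]
    rw [this]
    calc ‖(h' j - f j) * ginv‖ ≤ ‖h' j - f j‖ * ‖ginv‖ := norm_mul_le _ _
      _ ≤ (μ/2) * μ⁻¹ := by
          apply mul_le_mul (hh'dist j) hginvnorm (norm_nonneg _) (by positivity)
      _ = 1/2 := by field_simp
      _ ≤ 1 := by norm_num
  have hρ : ∀ j, 0 < ‖h' j * ginv‖ := by
    intro j
    rw [norm_pos_iff]
    intro hc
    apply hh'ne j
    ext x
    have := ContinuousMap.congr_fun hc x
    simp only [ContinuousMap.mul_apply, hginv, ContinuousMap.coe_mk,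
      ContinuousMap.zero_apply, mul_eq_zero, inv_eq_zero] at this ⊢
    rcases this with h1 | h1
    · exact h1
    · exact absurd h1 (hg x)
  -- choose s j
  have hex : ∀ j, ∃ s : ℝ, 0 ≤ s ∧ ‖((1+s) • h' j - f j) * ginv‖ = 1 := by
    intro j
    set S : ℝ := (1 + ‖f j * ginv‖) / ‖h' j * ginv‖ with hS
    have hSpos : 0 ≤ S := by positivity
    have hNS : 1 ≤ ‖((1+S) • h' j - f j) * ginv‖ := by
      have key : ((1+S) • h' j - f j) * ginv = (1+S) • (h' j * ginv) - f j * ginv := by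
        rw [sub_mul, smul_mul_assoc]
      rw [key]
      have h1 : ‖(1+S) • (h' j * ginv)‖ - ‖f j * ginv‖ ≤
          ‖(1+S) • (h' j * ginv) - f j * ginv‖ := norm_sub_norm_le _ _
      rw [norm_smul, Real.norm_eq_abs, abs_of_pos (by positivity)] at h1
      have h2 : (1+S) * ‖h' j * ginv‖ = ‖h' j * ginv‖ + (1 + ‖f j * ginv‖) := by
        rw [add_mul, one_mul, hS, div_mul_cancel₀ _ (hρ j).ne']
      nlinarith [hρ j, norm_nonneg (f j * ginv)]
    have := intermediate_value_Icc hSpos ((hNcont j).continuousOn)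
    have hmem : (1:ℝ) ∈ Set.Icc ‖((1+(0:ℝ)) • h' j - f j) * ginv‖
        ‖((1+S) • h' j - f j) * ginv‖ := ⟨hN0 j, hNS⟩
    obtain ⟨s, hs, hs1⟩ := this hmem
    exact ⟨s, hs.1, hs1⟩
  choose s hs0 hsnorm using hex
  refine ⟨fun j => ((1 + s j) • h' j - f j) * ginv, fun j => hsnorm j, ?_⟩
  intro x
  obtain ⟨j, hj⟩ := hinv x
  have hjne : h j ≠ 0 := fun hc => hj (by rw [hc]; rfl)
  have hj' : h' j x ≠ 0 := by simpa only [hh', if_neg hjne] using hj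
  refine ⟨j, ?_⟩
  have hgx := hg x
  have hc : (f j + ((1 + s j) • h' j - f j) * ginv * g) x = ((1 + s j : ℝ) : 𝕜) * h' j x := by
    simp only [ContinuousMap.add_apply, ContinuousMap.mul_apply, ContinuousMap.sub_apply,
      ContinuousMap.smul_apply, hginv, ContinuousMap.coe_mk]
    rw [RCLike.real_smul_eq_coe_mul, mul_assoc, inv_mul_cancel₀ hgx, mul_one]
    ring
  rw [hc]
  exact mul_ne_zero (RCLike.ofReal_ne_zero.mpr (by linarith [hs0 j])) hj'

set_option maxHeartbeats 1000000 in
private lemma stmt8_case1 (𝕜 : Type*) [RCLike 𝕜] (X : Type*) [TopologicalSpace X] [CompactSpace X]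
    [T2Space X] [Nonempty X] (n : ℕ) (hn : 0 < n)
    (f : Fin n → C(X, 𝕜)) (g : C(X, 𝕜))
    (hfg : ∀ x : X, (∃ j, f j x ≠ 0) ∨ g x ≠ 0)
    (hdense : ∀ ε : ℝ, 0 < ε → ∃ h : Fin n → C(X,𝕜),
      (∀ x, ∃ j, h j x ≠ 0) ∧ ∀ j, ‖h j - f j‖ < ε)
    (x₀ : X) (hgx₀ : g x₀ = 0) :
    ∃ v : Fin n → C(X, 𝕜), (∀ j, ‖v j‖ = 1) ∧
      ∀ x : X, ∃ j, (f j + v j * g) x ≠ 0 := by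
  classical
  -- minimum of the sum function
  have hF : Continuous fun x : X => (∑ j, ‖f j x‖) + ‖g x‖ := by fun_prop
  obtain ⟨xc, -, hxc⟩ := isCompact_univ.exists_isMinOn Set.univ_nonempty hF.continuousOn
  rw [isMinOn_iff] at hxc
  set c : ℝ := (∑ j, ‖f j xc‖) + ‖g xc‖ with hc
  have hcpos : 0 < c := by
    rcases hfg xc with ⟨j, hj⟩ | hgx
    · have h1 : 0 < ‖f j xc‖ := norm_pos_iff.mpr hj
      have h2 : ‖f j xc‖ ≤ ∑ i, ‖f i xc‖ :=
        Finset.single_le_sum (f := fun i => ‖f i xc‖) (fun i _ => norm_nonneg _)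
          (Finset.mem_univ j)
      have := norm_nonneg (g xc)
      linarith
    · have h1 : 0 < ‖g xc‖ := norm_pos_iff.mpr hgx
      have h2 : 0 ≤ ∑ j, ‖f j xc‖ := Finset.sum_nonneg fun i _ => norm_nonneg _
      linarith
  have hclb : ∀ x : X, c ≤ (∑ j, ‖f j x‖) + ‖g x‖ := fun x => hxc x trivial
  have hn' : (0:ℝ) < n := by exact_mod_cast hn
  set a : ℝ := c/(2*n) with ha
  set δ : ℝ := c/2 with hδ
  set ε : ℝ := c/(8*n) with hε
  have hapos : 0 < a := by positivity
  have hδpos : 0 < δ := by positivity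
  have hεpos : 0 < ε := by positivity
  have hone : (1:ℝ) ≤ n := by exact_mod_cast hn
  have hεa : ε < a := by
    rw [hε, ha, div_lt_div_iff₀ (by positivity) (by positivity)]
    nlinarith [mul_pos hcpos hn']
  have haδ : a/2 ≤ δ := by
    rw [ha, hδ, div_div, div_le_div_iff₀ (by positivity) (by norm_num)]
    nlinarith [mul_le_mul_of_nonneg_left hone hcpos.le]
  have hεδ : ε * δ⁻¹ ≤ 1 := by
    rw [hε, hδ, ← div_eq_mul_inv, div_le_one (by positivity),
      div_le_div_iff₀ (by positivity) (by norm_num)]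
    nlinarith [mul_le_mul_of_nonneg_left hone hcpos.le]
  have hbig : ∀ x : X, ‖g x‖ < δ → ∃ j, a ≤ ‖f j x‖ := by
    intro x hx
    have hsum : ∑ _j : Fin n, a ≤ ∑ j, ‖f j x‖ := by
      have h1 := hclb x
      rw [Finset.sum_const, Finset.card_univ, Fintype.card_fin, nsmul_eq_mul]
      have h2 : (n:ℝ) * a = c/2 := by rw [ha]; field_simp
      rw [hδ] at hx
      linarith
    haveI : Nonempty (Fin n) := Fin.pos_iff_nonempty.mp hn
    obtain ⟨j, -, hj⟩ := Finset.exists_le_of_sum_le Finset.univ_nonempty hsum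
    exact ⟨j, hj⟩
  -- approximation
  obtain ⟨h, hinv, hdist⟩ := hdense ε hεpos
  have hdistx : ∀ j x, ‖h j x - f j x‖ < ε := by
    intro j x
    have h1 : ‖(h j - f j) x‖ ≤ ‖h j - f j‖ := ContinuousMap.norm_coe_le_norm _ x
    have h2 := hdist j
    simp only [ContinuousMap.sub_apply] at h1
    linarith
  -- regularized conjugate
  have hq : ∀ x : X, 0 < max (‖g x‖^2) (δ^2) := fun x => lt_max_of_lt_right (by positivity)
  set w : C(X, 𝕜) := ⟨fun x => (starRingEnd 𝕜) (g x) * (((max (‖g x‖^2) (δ^2) : ℝ) : 𝕜))⁻¹, by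
    apply Continuous.mul
    · exact continuous_star.comp (map_continuous g)
    · apply Continuous.inv₀
      · exact RCLike.continuous_ofReal.comp (((map_continuous g).norm.pow 2).max continuous_const)
      · intro x
        exact RCLike.ofReal_ne_zero.mpr (hq x).ne'⟩ with hw
  have hwnorm : ∀ x, ‖w x‖ = ‖g x‖ / max (‖g x‖^2) (δ^2) := by
    intro x
    simp only [hw, ContinuousMap.coe_mk, norm_mul, norm_inv, RCLike.norm_conj,
      RCLike.norm_ofReal, abs_of_pos (hq x), div_eq_mul_inv]
  have hwg : ∀ x, ‖w x * g x‖ ≤ 1 := by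
    intro x
    rw [norm_mul, hwnorm x, div_mul_eq_mul_div, div_le_one (hq x)]
    calc ‖g x‖ * ‖g x‖ = ‖g x‖^2 := by ring
      _ ≤ max (‖g x‖^2) (δ^2) := le_max_left _ _
  have hwδ : ∀ x, ‖w x‖ ≤ δ⁻¹ := by
    intro x
    rw [hwnorm x, div_le_iff₀ (hq x), inv_mul_eq_div, le_div_iff₀ hδpos]
    rcases le_total ‖g x‖ δ with h1 | h1
    · calc ‖g x‖ * δ ≤ δ * δ := by nlinarith [norm_nonneg (g x)]
        _ = δ^2 := by ring
        _ ≤ _ := le_max_right _ _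
    · calc ‖g x‖ * δ ≤ ‖g x‖ * ‖g x‖ := by nlinarith
        _ = ‖g x‖^2 := by ring
        _ ≤ _ := le_max_left _ _
  have hwinv : ∀ x, δ ≤ ‖g x‖ → w x * g x = 1 := by
    intro x hx
    have hmax : max (‖g x‖^2) (δ^2) = ‖g x‖^2 :=
      max_eq_left (by nlinarith [norm_nonneg (g x)])
    have hgne : ‖g x‖ ≠ 0 := by linarith
    simp only [hw, ContinuousMap.coe_mk, hmax]
    push_cast
    rw [mul_comm _ (g x), ← mul_assoc, RCLike.mul_conj]
    exact mul_inv_cancel₀ (pow_ne_zero 2 (RCLike.ofReal_ne_zero.mpr hgne))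
  -- Urysohn
  set sU : Set X := {x | a/2 ≤ ‖g x‖} with hsU
  have hsclosed : IsClosed sU := isClosed_le continuous_const (map_continuous g).norm
  have hx₀ : x₀ ∉ sU := by
    simp only [hsU, Set.mem_setOf_eq, hgx₀, norm_zero, not_le]
    positivity
  obtain ⟨ψ, hψ0, hψ1, hψmem⟩ := exists_continuous_zero_one_of_isClosed
    hsclosed isClosed_singleton (Set.disjoint_singleton_right.mpr hx₀)
  set ψK : C(X, 𝕜) := ⟨fun x => ((ψ x : ℝ) : 𝕜),
    RCLike.continuous_ofReal.comp (map_continuous ψ)⟩ with hψK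
  set v₀ : Fin n → C(X, 𝕜) := fun j => (h j - f j) * w with hv₀
  set v : Fin n → C(X, 𝕜) := fun j => (1 - ψK) * v₀ j + ψK with hv
  have hv₀le : ∀ j x, ‖v₀ j x‖ ≤ 1 := by
    intro j x
    simp only [hv₀, ContinuousMap.mul_apply, ContinuousMap.sub_apply, norm_mul]
    calc ‖h j x - f j x‖ * ‖w x‖ ≤ ε * δ⁻¹ :=
          mul_le_mul (hdistx j x).le (hwδ x) (norm_nonneg _) hεpos.le
      _ ≤ 1 := hεδ
  have hv₀g : ∀ j x, ‖v₀ j x * g x‖ ≤ ε := by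
    intro j x
    simp only [hv₀, ContinuousMap.mul_apply, ContinuousMap.sub_apply]
    rw [mul_assoc, norm_mul]
    calc ‖h j x - f j x‖ * ‖w x * g x‖ ≤ ε * 1 :=
          mul_le_mul (hdistx j x).le (hwg x) (norm_nonneg _) hεpos.le
      _ = ε := mul_one _
  have hvx : ∀ j x, v j x = (1 - ((ψ x : ℝ):𝕜)) * v₀ j x + ((ψ x : ℝ):𝕜) := by
    intro j x
    simp [hv, hψK]
  have hvle : ∀ j x, ‖v j x‖ ≤ 1 := by
    intro j x
    obtain ⟨h0, h1⟩ := hψmem x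
    have e1 : (1 : 𝕜) - ((ψ x : ℝ):𝕜) = (((1 - ψ x : ℝ)):𝕜) := by push_cast; ring
    have e2 : ‖(1 : 𝕜) - ((ψ x : ℝ):𝕜)‖ = 1 - ψ x := by
      rw [e1, RCLike.norm_ofReal, abs_of_nonneg (by linarith)]
    have e3 : ‖((ψ x : ℝ):𝕜)‖ = ψ x := by
      rw [RCLike.norm_ofReal, abs_of_nonneg h0]
    rw [hvx]
    refine le_trans (norm_add_le _ _) ?_
    refine le_trans (add_le_add_left (norm_mul_le _ _) _) ?_
    rw [e2, e3]
    have h4 : (1 - ψ x) * ‖v₀ j x‖ ≤ (1 - ψ x) * 1 :=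
      mul_le_mul_of_nonneg_left (hv₀le j x) (by linarith)
    linarith
  have hψx₀ : ψ x₀ = 1 := by simpa using hψ1 (Set.mem_singleton x₀)
  refine ⟨v, ?_, ?_⟩
  · intro j
    apply le_antisymm
    · exact (ContinuousMap.norm_le _ zero_le_one).mpr (hvle j)
    · have hx : v j x₀ = 1 := by
        rw [hvx, hψx₀]
        push_cast
        ring
      calc (1:ℝ) = ‖v j x₀‖ := by rw [hx]; simp
        _ ≤ ‖v j‖ := ContinuousMap.norm_coe_le_norm _ x₀
  · intro x
    rcases lt_or_ge ‖g x‖ δ with hlt | hge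
    · obtain ⟨j, hj⟩ := hbig x hlt
      refine ⟨j, ?_⟩
      have hbound : ‖v j x * g x‖ < a := by
        by_cases hmem : x ∈ sU
        · have hψx : ψ x = 0 := by simpa using hψ0 hmem
          rw [hvx, hψx]
          push_cast
          rw [sub_zero, one_mul, add_zero]
          exact lt_of_le_of_lt (hv₀g j x) hεa
        · have hgxs : ‖g x‖ < a/2 := by
            simpa [hsU, not_le] using hmem
          calc ‖v j x * g x‖ ≤ ‖v j x‖ * ‖g x‖ := norm_mul_le _ _
            _ ≤ 1 * ‖g x‖ := mul_le_mul_of_nonneg_right (hvle j x) (norm_nonneg _)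
            _ < a := by rw [one_mul]; linarith
      simp only [ContinuousMap.add_apply, ContinuousMap.mul_apply]
      intro hzero
      have he : f j x = -(v j x * g x) := eq_neg_of_add_eq_zero_left hzero
      rw [he, norm_neg] at hj
      linarith
    · have hmem : x ∈ sU := by
        simp only [hsU, Set.mem_setOf_eq]; linarith
      have hψx : ψ x = 0 := by simpa using hψ0 hmem
      obtain ⟨j, hj⟩ := hinv x
      refine ⟨j, ?_⟩
      have hwg1 := hwinv x hge
      have hkey : (f j + v j * g) x = h j x := by
        simp only [ContinuousMap.add_apply, ContinuousMap.mul_apply]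
        rw [hvx, hψx]
        push_cast
        rw [sub_zero, one_mul, add_zero, hv₀]
        simp only [ContinuousMap.mul_apply, ContinuousMap.sub_apply]
        rw [mul_assoc, hwg1, mul_one]
        ring
      rw [hkey]
      exact hj

/-- For `A = C(X, 𝕜)` with `X` compact Hausdorff: if `tsr A ≤ n` (invertible `n`-tuples
dense), then `nor A ≤ n`: every invertible `(n+1)`-tuple `(f, g)` admits `v ∈ Aⁿ` with
`‖v_j‖_∞ = 1` such that `f + v·g` has no common zero. -/
theorem stmt8 (𝕜 : Type*) [RCLike 𝕜] (X : Type*) [TopologicalSpace X] [CompactSpace X]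
    [T2Space X] [Nonempty X] (n : ℕ)
    (htsr : Dense {f : Fin n → C(X, 𝕜) | ∀ x : X, ∃ j, f j x ≠ 0})
    (f : Fin n → C(X, 𝕜)) (g : C(X, 𝕜))
    (hfg : ∀ x : X, (∃ j, f j x ≠ 0) ∨ g x ≠ 0) :
    ∃ v : Fin n → C(X, 𝕜), (∀ j, ‖v j‖ = 1) ∧
      ∀ x : X, ∃ j, (f j + v j * g) x ≠ 0 := by
  classical
  have hdense : ∀ ε : ℝ, 0 < ε → ∃ h : Fin n → C(X,𝕜),
      (∀ x, ∃ j, h j x ≠ 0) ∧ ∀ j, ‖h j - f j‖ < ε := by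
    intro ε hε
    obtain ⟨h, hhS, hdist⟩ := Metric.mem_closure_iff.mp (htsr f) ε hε
    refine ⟨h, hhS, fun j => ?_⟩
    have := (dist_pi_lt_iff hε).mp hdist j
    rw [dist_comm, dist_eq_norm] at this
    exact this
  rcases Nat.eq_zero_or_pos n with hn | hn
  · subst hn
    obtain ⟨f0, hf0⟩ := htsr.nonempty
    obtain ⟨j, -⟩ := hf0 (Classical.arbitrary X)
    exact j.elim0
  by_cases hg : ∃ x₀ : X, g x₀ = 0
  · obtain ⟨x₀, hx₀⟩ := hg
    exact stmt8_case1 𝕜 X n hn f g hfg hdense x₀ hx₀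
  · push_neg at hg
    exact stmt8_case2 𝕜 X n f g hdense hg
end

section
/- Let X be a compact Hausdorff space, g ∈ C(X,𝕂) with nonempty zero set Z(g), and let f = (f₁,...,fₙ) ∈ C(X,𝕂)ⁿ be such that (f, g) has no common zero. Then there exist open sets U, W and a continuous function φ : X → [0,1] with Z(g) ⊆ W ⊆ closure(W) ⊆ Z(φ) ⊆ U, φ = 1 on X \ U, and f ≠ 0 at every point of U; consequently (f, φ) ∈ U_{n+1}(C(X,𝕂)). -/
/-- Let `g ∈ C(X, 𝕜)` have nonempty zero set and let `(f, g)` have no common zero. Then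
there are open sets `U, W` and a continuous `φ : X → [0,1]` with
`Z(g) ⊆ W ⊆ closure W ⊆ Z(φ) ⊆ U`, `φ = 1` off `U`, and `f ≠ 0` on `U`; consequently
`(f, φ)` is an invertible `(n+1)`-tuple. -/
theorem stmt12 (𝕜 : Type*) [RCLike 𝕜] (X : Type*) [TopologicalSpace X] [CompactSpace X]
    [T2Space X] (n : ℕ) (f : Fin n → C(X, 𝕜)) (g : C(X, 𝕜))
    (hZ : ∃ x : X, g x = 0)
    (hfg : ∀ x : X, g x = 0 → ∃ j, f j x ≠ 0) :
    ∃ (U W : Set X) (φ : C(X, ℝ)), IsOpen U ∧ IsOpen W ∧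
      (∀ x : X, φ x ∈ Set.Icc (0 : ℝ) 1) ∧
      {x : X | g x = 0} ⊆ W ∧
      closure W ⊆ {x : X | φ x = 0} ∧
      {x : X | φ x = 0} ⊆ U ∧
      (∀ x ∉ U, φ x = 1) ∧
      (∀ x ∈ U, ∃ j, f j x ≠ 0) ∧
      (∀ x : X, (∃ j, f j x ≠ 0) ∨ φ x ≠ 0) := by
  classical
  set U : Set X := {x | ∃ j, f j x ≠ 0} with hU
  have hUopen : IsOpen U := by
    rw [isOpen_iff_mem_nhds]
    intro x hx
    obtain ⟨j, hj⟩ := hx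
    have : {y : X | f j y ≠ 0} ∈ nhds x :=
      (isOpen_compl_iff.mpr (isClosed_eq (f j).continuous continuous_const)).mem_nhds hj
    exact Filter.mem_of_superset this fun y hy => ⟨j, hy⟩
  have hZclosed : IsClosed {x : X | g x = 0} := isClosed_eq g.continuous continuous_const
  have hZU : {x : X | g x = 0} ⊆ U := fun x hx => hfg x hx
  obtain ⟨W, hWopen, hZW, hWU⟩ := normal_exists_closure_subset hZclosed hUopen hZU
  have hdisj : Disjoint (closure W) Uᶜ := Set.disjoint_compl_right_iff_subset.mpr hWU
  obtain ⟨φ, hφ0, hφ1, hφ01⟩ := exists_continuous_zero_one_of_isClosed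
    isClosed_closure (isClosed_compl_iff.mpr hUopen) hdisj
  refine ⟨U, W, φ, hUopen, hWopen, hφ01, hZW, fun x hx => hφ0 hx, ?_, fun x hx => hφ1 hx, fun x hx => hx, ?_⟩
  · intro x hx
    by_contra hxU
    have := hφ1 hxU
    rw [Set.mem_setOf_eq] at hx
    simp [hx] at this
  · intro x
    by_cases h : φ x = 0
    · refine Or.inl ?_
      by_contra hc
      have hxU : x ∉ U := by
        intro hu
        obtain ⟨j, hj⟩ := hu
        exact hc ⟨j, hj⟩
      have := hφ1 hxU
      simp [h] at this
    · exact Or.inr h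
end

section
/- Let X be a compact Hausdorff space and A = C(X, 𝕂) with 𝕂 = ℝ or ℂ. If for a pair (f,g) with no common zero there exists a ∈ A with ‖a‖_∞ < 1/2 such that u := f + a g has no zero, and if Z(g) ≠ ∅, then there exists φa-scaled function c ∈ A with ‖c‖_∞ = 1 such that f + c·g has no zero on X. -/
/-- If the pair `(f, g)` in `C(X, 𝕜)` has no common zero, some `a` with `‖a‖_∞ < 1/2` makes
`f + a·g` zero-free, and `Z(g) ≠ ∅`, then there is `c` with `‖c‖_∞ = 1` such that `f + c·g`
has no zero on `X` (i.e. `(f, g)` is norm-one reducible). -/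
theorem stmt13 (𝕜 : Type*) [RCLike 𝕜] (X : Type*) [TopologicalSpace X] [CompactSpace X]
    [T2Space X] (f g : C(X, 𝕜))
    (hfg : ∀ x : X, f x ≠ 0 ∨ g x ≠ 0)
    (ha : ∃ a : C(X, 𝕜), ‖a‖ < 1 / 2 ∧ ∀ x : X, f x + a x * g x ≠ 0)
    (hZ : ∃ x : X, g x = 0) :
    ∃ c : C(X, 𝕜), ‖c‖ = 1 ∧ ∀ x : X, f x + c x * g x ≠ 0 := by
  obtain ⟨a, hanorm, hu⟩ := ha
  obtain ⟨x0, hx0⟩ := hZ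
  set u : C(X, 𝕜) := f + a * g with hudef
  have hux : ∀ x, u x = f x + a x * g x := fun x => by simp [hudef]
  -- minimum of ‖u x‖
  obtain ⟨xm, -, hxm⟩ := isCompact_univ.exists_isMinOn ⟨x0, trivial⟩
    ((continuous_norm.comp u.continuous).continuousOn (s := Set.univ))
  set δ : ℝ := ‖u xm‖ with hδdef
  have hδpos : 0 < δ := by
    have h1 := hu xm
    rw [← hux] at h1
    exact norm_pos_iff.mpr h1
  -- open set where g is small
  set V : Set X := {x | ‖g x‖ < 2 * δ / 3} with hVdef
  have hVopen : IsOpen V := isOpen_lt (by continuity) continuous_const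
  have hx0V : x0 ∈ V := by
    simp [hVdef, hx0]
    positivity
  have hd : Disjoint Vᶜ ({x0} : Set X) := by
    simp [Set.disjoint_singleton_right, hx0V]
  obtain ⟨h, h0, h1, hbd⟩ := exists_continuous_zero_one_of_isClosed
    hVopen.isClosed_compl isClosed_singleton hd
  set hk : C(X, 𝕜) := (⟨algebraMap ℝ 𝕜, continuous_algebraMap ℝ 𝕜⟩ : C(ℝ, 𝕜)).comp h
  set c : C(X, 𝕜) := a + hk * (1 - a) with hcdef
  have hcx : ∀ x, c x = a x + (algebraMap ℝ 𝕜 (h x)) * (1 - a x) := fun x => by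
    simp [hcdef, hk]
  have hax : ∀ x, ‖a x‖ < 1 / 2 := fun x =>
    lt_of_le_of_lt (a.norm_coe_le_norm x) hanorm
  have hnormalg : ∀ r : ℝ, ‖algebraMap ℝ 𝕜 r‖ = |r| := fun r => by
    rw [Algebra.algebraMap_eq_smul_one, norm_smul, norm_one, mul_one]
    exact Real.norm_eq_abs r
  refine ⟨c, ?_, ?_⟩
  · apply le_antisymm
    · apply ContinuousMap.norm_le _ zero_le_one |>.mpr
      intro x
      rw [hcx x]
      have hb := hbd x
      have h1t : ‖(1 : 𝕜) - algebraMap ℝ 𝕜 (h x)‖ = 1 - h x := by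
        rw [← map_one (algebraMap ℝ 𝕜), ← map_sub, hnormalg, abs_of_nonneg (by linarith [hb.2])]
      calc ‖a x + (algebraMap ℝ 𝕜 (h x)) * (1 - a x)‖
          = ‖(1 - algebraMap ℝ 𝕜 (h x)) * a x + algebraMap ℝ 𝕜 (h x)‖ := by ring_nf
        _ ≤ ‖(1 - algebraMap ℝ 𝕜 (h x)) * a x‖ + ‖algebraMap ℝ 𝕜 (h x)‖ := norm_add_le _ _
        _ = (1 - h x) * ‖a x‖ + h x := by
            rw [norm_mul, h1t, hnormalg, abs_of_nonneg hb.1]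
        _ ≤ 1 := by nlinarith [hax x, hb.1, hb.2, norm_nonneg (a x)]
    · have : ‖c x0‖ ≤ ‖c‖ := c.norm_coe_le_norm x0
      have hcx0 : c x0 = 1 := by
        have := h1 rfl
        simp only [Pi.one_apply] at this
        rw [hcx x0, this, map_one]
        ring
      rw [hcx0] at this
      simpa using this
  · intro x
    have key : ‖(algebraMap ℝ 𝕜 (h x)) * (1 - a x) * g x‖ < δ := by
      rcases eq_or_ne (h x) 0 with hz | hz
      · simp [hz, hδpos]
      · have hxV : x ∈ V := by
          by_contra hxV
          exact hz (h0 hxV)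
        have hgx : ‖g x‖ < 2 * δ / 3 := hxV
        have h1a : ‖(1 : 𝕜) - a x‖ < 3 / 2 := by
          calc ‖(1 : 𝕜) - a x‖ ≤ 1 + ‖a x‖ := by simpa using norm_sub_le (1 : 𝕜) (a x)
            _ < 3 / 2 := by linarith [hax x]
        have hh : ‖algebraMap ℝ 𝕜 (h x)‖ ≤ 1 := by
          rw [hnormalg, abs_of_nonneg (hbd x).1]; exact (hbd x).2
        calc ‖(algebraMap ℝ 𝕜 (h x)) * (1 - a x) * g x‖
            = ‖algebraMap ℝ 𝕜 (h x)‖ * ‖(1 : 𝕜) - a x‖ * ‖g x‖ := by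
              rw [norm_mul, norm_mul]
          _ ≤ 1 * ‖(1 : 𝕜) - a x‖ * ‖g x‖ := by gcongr
          _ < 1 * (3 / 2) * (2 * δ / 3) := by
              have hg0 : (0:ℝ) ≤ ‖g x‖ := norm_nonneg _
              have h1a0 : (0:ℝ) ≤ ‖(1:𝕜) - a x‖ := norm_nonneg _
              rcases eq_or_lt_of_le hg0 with hge | hgpos
              · rw [one_mul, one_mul, ← hge, mul_zero]
                positivity
              · nlinarith
          _ = δ := by ring
    have hδle : δ ≤ ‖u x‖ := hxm (Set.mem_univ x)
    have hrw : f x + c x * g x = u x + (algebraMap ℝ 𝕜 (h x)) * (1 - a x) * g x := by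
      rw [hcx x, hux x]; ring
    rw [hrw]
    intro hcontra
    have : u x = -((algebraMap ℝ 𝕜 (h x)) * (1 - a x) * g x) := by
      linear_combination hcontra
    rw [this, norm_neg] at hδle
    linarith
end

section
/- Let R be a commutative unital ring, (f₁,...,fₘ,g) ∈ U_{m+1}(R) with m ≥ n+1, and write h = r + c·g where r lies in the ideal generated by fₙ₊₁+g, ..., fₘ+g and c ∈ R. If (x₁,...,xₙ) ∈ Rⁿ satisfies (f₁ + x₁h, ..., fₙ + xₙh) ∈ U_n(R), then (f₁ + x₁c·g, ..., fₙ + xₙc·g, fₙ₊₁ + g, ..., fₘ + g) ∈ U_m(R). -/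
/-- Let `(f₁,…,fₙ, F₁,…,F_k, g)` be an invertible `(m+1)`-tuple (`m = n + k`, `k ≥ 1`), and
write `h = r + c·g` with `r` in the ideal generated by `F₁+g, …, F_k+g`. If
`(f₁ + x₁ h, …, fₙ + xₙ h)` is invertible, then
`(f₁ + x₁ c g, …, fₙ + xₙ c g, F₁ + g, …, F_k + g)` is an invertible `m`-tuple. -/
theorem stmt16 (R : Type*) [CommRing R] (n k : ℕ) (hk : 1 ≤ k)
    (f : Fin n → R) (F : Fin k → R) (g : R)
    (hfg : ∃ (x : Fin n → R) (z : Fin k → R) (y : R),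
      ∑ j, x j * f j + ∑ i, z i * F i + y * g = 1)
    (r c h : R)
    (hr : r ∈ Ideal.span (Set.range fun i : Fin k => F i + g))
    (hh : h = r + c * g)
    (x : Fin n → R)
    (hx : ∃ y : Fin n → R, ∑ j, y j * (f j + x j * h) = 1) :
    ∃ (p : Fin n → R) (q : Fin k → R),
      ∑ j, p j * (f j + x j * (c * g)) + ∑ i, q i * (F i + g) = 1 := by
  obtain ⟨y, hy⟩ := hx
  rw [Ideal.mem_span_range_iff_exists_fun] at hr
  obtain ⟨z, hz⟩ := hr
  refine ⟨y, fun i => (∑ j, y j * x j) * z i, ?_⟩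
  have : ∑ i, ((∑ j, y j * x j) * z i) * (F i + g) = (∑ j, y j * x j) * r := by
    rw [← hz, Finset.mul_sum]
    exact Finset.sum_congr rfl fun i _ => by ring
  rw [this, ← hy]
  rw [Finset.sum_mul, ← Finset.sum_add_distrib]
  exact Finset.sum_congr rfl fun j _ => by rw [hh]; ring
end

section
/- Let A be a commutative unital Banach algebra whose group of invertibles is dense (tsr A = 1). Then A has the unit-1-stable rank: for every pair (a,b) ∈ A² with aA + bA = A there exist invertible u, v ∈ A⁻¹ with u a + v b = 1. -/
/-- A commutative unital Banach algebra with dense group of invertibles (`tsr A = 1`) has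
the unit-1-stable rank: every invertible pair `(a, b)` is totally reducible. -/
theorem stmt17 (𝕜 : Type*) [RCLike 𝕜] (A : Type*) [NormedCommRing A] [NormedAlgebra 𝕜 A]
    [CompleteSpace A]
    (htsr : Dense {a : A | IsUnit a}) :
    ∀ a b : A, (∃ x y : A, x * a + y * b = 1) →
      ∃ u v : A, IsUnit u ∧ IsUnit v ∧ u * a + v * b = 1 := by
  rintro a b ⟨x, y, hxy⟩
  have hεa : (0:ℝ) < 1 / (2 * (‖a‖ + 1)) := by positivity
  have hεb : (0:ℝ) < 1 / (2 * (‖b‖ + 1)) := by positivity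
  obtain ⟨u, hu, hux⟩ := Metric.mem_closure_iff.mp (htsr x) _ hεa
  obtain ⟨v, hv, hvy⟩ := Metric.mem_closure_iff.mp (htsr y) _ hεb
  rw [dist_comm, dist_eq_norm] at hux hvy
  have ha1 : ‖(u - x) * a‖ < 1 / 2 := by
    calc ‖(u - x) * a‖ ≤ ‖u - x‖ * ‖a‖ := norm_mul_le _ _
      _ < (1 / (2 * (‖a‖ + 1))) * (‖a‖ + 1) := by
          apply mul_lt_mul' hux.le ?_ (norm_nonneg _) hεa
          linarith [norm_nonneg a]
      _ = 1 / 2 := by field_simp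
  have hb1 : ‖(v - y) * b‖ < 1 / 2 := by
    calc ‖(v - y) * b‖ ≤ ‖v - y‖ * ‖b‖ := norm_mul_le _ _
      _ < (1 / (2 * (‖b‖ + 1))) * (‖b‖ + 1) := by
          apply mul_lt_mul' hvy.le ?_ (norm_nonneg _) hεb
          linarith [norm_nonneg b]
      _ = 1 / 2 := by field_simp
  set e : A := (u - x) * a + (v - y) * b with he
  have henorm : ‖e‖ < 1 := by
    calc ‖e‖ ≤ ‖(u - x) * a‖ + ‖(v - y) * b‖ := norm_add_le _ _
      _ < 1 := by linarith
  have ht : IsUnit (u * a + v * b) := by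
    have : u * a + v * b = 1 - (-e) := by
      rw [he]; rw [← hxy]; ring
    rw [this]
    exact (Units.oneSub (-e) (by simpa using henorm)).isUnit
  obtain ⟨t, htv⟩ := ht
  refine ⟨(↑t⁻¹ : A) * u, (↑t⁻¹ : A) * v, (t⁻¹.isUnit).mul hu, (t⁻¹.isUnit).mul hv, ?_⟩
  have : (↑t⁻¹ : A) * u * a + (↑t⁻¹ : A) * v * b = (↑t⁻¹ : A) * (u * a + v * b) := by ring
  rw [this, ← htv, Units.inv_mul]
end

section
/- Let X be a compact Hausdorff space, f = (f₁,...,fₙ) and g in C(X,𝕂) with Z(g) ≠ ∅ and |f| > δ > 0 on Z(g) (pointwise Euclidean norm). Let y ∈ C(X,𝕂)ⁿ with |y_j| ≤ 1/2 pointwise and u := f + y·g nowhere jointly vanishing. Let V be open with Z(g) ⊆ V and |g| < δ/(2√n), |f| > δ on closure(V), and let ψ : X → [0,1] be continuous with ψ = 0 off V and ψ = 1 on an open set U ⊇ Z(g). Define v_j := ψ + y_j(1 − ψ). Then ‖v_j‖_∞ ≤ 1 for each j, and the tuple f + v·g has no common zero on X: indeed |f + v·g| = |u| > 0 on X \ V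 and |f + v·g| ≥ δ/2 on V. -/
/-- The key construction for the norm-one rank of `C(X, 𝕜)`: with `|f| > δ` near `Z(g)`,
`|y_j| ≤ 1/2`, `u := f + y·g` nowhere jointly vanishing, `V ⊇ Z(g)` open with `|g| < δ/(2√n)`
and `|f| > δ` on its closure, and `ψ` a Urysohn function (`ψ = 0` off `V`, `ψ = 1` on an open
`U ⊇ Z(g)`), the functions `v_j := ψ + y_j (1 − ψ)` satisfy `‖v_j‖_∞ ≤ 1`, and `f + v·g`
has pointwise Euclidean norm equal to `|u|` off `V` and at least `δ/2` on `V`; in particular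
it has no common zero. -/
theorem stmt18 (𝕜 : Type*) [RCLike 𝕜] (X : Type*) [TopologicalSpace X] [CompactSpace X]
    [T2Space X] (n : ℕ)
    (f y : Fin n → C(X, 𝕜)) (g : C(X, 𝕜)) (δ : ℝ) (hδ : 0 < δ)
    (hZ : ∃ x : X, g x = 0)
    (hfZ : ∀ x : X, g x = 0 → δ < Real.sqrt (∑ j, ‖f j x‖ ^ 2))
    (hy : ∀ (j : Fin n) (x : X), ‖y j x‖ ≤ 1 / 2)
    (hu : ∀ x : X, ∃ j, f j x + y j x * g x ≠ 0)
    (V : Set X) (hV : IsOpen V) (hZV : {x : X | g x = 0} ⊆ V)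
    (hgV : ∀ x ∈ closure V, ‖g x‖ < δ / (2 * Real.sqrt n))
    (hfV : ∀ x ∈ closure V, δ < Real.sqrt (∑ j, ‖f j x‖ ^ 2))
    (ψ : C(X, ℝ)) (hψ01 : ∀ x : X, ψ x ∈ Set.Icc (0 : ℝ) 1)
    (hψ0 : ∀ x ∉ V, ψ x = 0)
    (U : Set X) (hU : IsOpen U) (hZU : {x : X | g x = 0} ⊆ U)
    (hψ1 : ∀ x ∈ U, ψ x = 1) :
    (∀ (j : Fin n) (x : X), ‖((ψ x : 𝕜) + y j x * (1 - (ψ x : 𝕜)))‖ ≤ 1) ∧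
    (∀ x ∉ V,
      Real.sqrt (∑ j, ‖f j x + ((ψ x : 𝕜) + y j x * (1 - (ψ x : 𝕜))) * g x‖ ^ 2) =
      Real.sqrt (∑ j, ‖f j x + y j x * g x‖ ^ 2)) ∧
    (∀ x ∈ V,
      δ / 2 ≤ Real.sqrt (∑ j, ‖f j x + ((ψ x : 𝕜) + y j x * (1 - (ψ x : 𝕜))) * g x‖ ^ 2)) ∧
    (∀ x : X, ∃ j, f j x + ((ψ x : 𝕜) + y j x * (1 - (ψ x : 𝕜))) * g x ≠ 0) := by

  have hv1 : ∀ (j : Fin n) (x : X), ‖((ψ x : 𝕜) + y j x * (1 - (ψ x : 𝕜)))‖ ≤ 1 := by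
    intro j x
    obtain ⟨h0, h1⟩ := hψ01 x
    have e1 : ‖((ψ x : ℝ) : 𝕜)‖ = ψ x := by
      rw [RCLike.norm_ofReal, abs_of_nonneg h0]
    have e2 : ‖(1 - ((ψ x : ℝ) : 𝕜))‖ = 1 - ψ x := by
      have h : (1 - ((ψ x : ℝ) : 𝕜)) = ((1 - ψ x : ℝ) : 𝕜) := by push_cast; ring
      rw [h, RCLike.norm_ofReal, abs_of_nonneg (by linarith)]
    have := norm_add_le ((ψ x : 𝕜)) (y j x * (1 - (ψ x : 𝕜)))
    rw [norm_mul, e1, e2] at this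
    nlinarith [hy j x, norm_nonneg (y j x)]
  have heq : ∀ x ∉ V,
      Real.sqrt (∑ j, ‖f j x + ((ψ x : 𝕜) + y j x * (1 - (ψ x : 𝕜))) * g x‖ ^ 2) =
      Real.sqrt (∑ j, ‖f j x + y j x * g x‖ ^ 2) := by
    intro x hx
    have h0 : ψ x = 0 := hψ0 x hx
    simp [h0]
  have key : ∀ x ∈ V,
      δ / 2 ≤ Real.sqrt (∑ j, ‖f j x + ((ψ x : 𝕜) + y j x * (1 - (ψ x : 𝕜))) * g x‖ ^ 2) := by
    intro x hx
    have hxc : x ∈ closure V := subset_closure hx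
    have hn : 0 < n := by
      rcases Nat.eq_zero_or_pos n with h | h
      · exfalso
        have := hfV x hxc
        subst h
        simp at this
        linarith
      · exact h
    set a : EuclideanSpace 𝕜 (Fin n) := WithLp.toLp 2 (fun j => f j x) with ha_def
    set b : EuclideanSpace 𝕜 (Fin n) :=
      WithLp.toLp 2 (fun j => ((ψ x : 𝕜) + y j x * (1 - (ψ x : 𝕜))) * g x) with hb_def
    have ha : ‖a‖ = Real.sqrt (∑ j, ‖f j x‖ ^ 2) := EuclideanSpace.norm_eq a
    have hab : Real.sqrt (∑ j, ‖f j x + ((ψ x : 𝕜) + y j x * (1 - (ψ x : 𝕜))) * g x‖ ^ 2)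
        = ‖a + b‖ := by
      rw [EuclideanSpace.norm_eq]
      rfl
    have hsn : (0:ℝ) < Real.sqrt n := Real.sqrt_pos.mpr (by exact_mod_cast hn)
    have hb : ‖b‖ ≤ Real.sqrt n * ‖g x‖ := by
      rw [EuclideanSpace.norm_eq]
      have hsum : ∑ j, ‖b j‖ ^ 2 ≤ (n : ℝ) * ‖g x‖ ^ 2 := by
        calc ∑ j, ‖b j‖ ^ 2 ≤ ∑ _j : Fin n, ‖g x‖ ^ 2 := by
              apply Finset.sum_le_sum
              intro j _
              have hbj : ‖b j‖ ≤ ‖g x‖ := by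
                have : ‖b j‖ = ‖((ψ x : 𝕜) + y j x * (1 - (ψ x : 𝕜)))‖ * ‖g x‖ := by
                  simp [hb_def, norm_mul]
                rw [this]
                nlinarith [hv1 j x, norm_nonneg (g x)]
              nlinarith [norm_nonneg (b j)]
          _ = (n : ℝ) * ‖g x‖ ^ 2 := by simp [Finset.sum_const]
      calc Real.sqrt (∑ j, ‖b j‖ ^ 2) ≤ Real.sqrt ((n : ℝ) * ‖g x‖ ^ 2) :=
            Real.sqrt_le_sqrt hsum
        _ = Real.sqrt n * ‖g x‖ := by
            rw [Real.sqrt_mul (by positivity), Real.sqrt_sq (norm_nonneg _)]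
    have hga : ‖g x‖ < δ / (2 * Real.sqrt n) := hgV x hxc
    have hfa : δ < ‖a‖ := by rw [ha]; exact hfV x hxc
    have h2 : ‖b‖ < δ / 2 := by
      calc ‖b‖ ≤ Real.sqrt n * ‖g x‖ := hb
        _ < Real.sqrt n * (δ / (2 * Real.sqrt n)) :=
            mul_lt_mul_of_pos_left hga hsn
        _ = δ / 2 := by field_simp
    have h3 : ‖a‖ ≤ ‖a + b‖ + ‖b‖ := by
      have := norm_add_le (a + b) (-b)
      simpa using this
    rw [hab]
    linarith
  refine ⟨hv1, heq, key, ?_⟩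
  intro x
  by_cases hx : x ∈ V
  · by_contra h
    push_neg at h
    have hz : Real.sqrt (∑ j, ‖f j x + ((ψ x : 𝕜) + y j x * (1 - (ψ x : 𝕜))) * g x‖ ^ 2) = 0 := by
      have : ∑ j, ‖f j x + ((ψ x : 𝕜) + y j x * (1 - (ψ x : 𝕜))) * g x‖ ^ 2 = 0 := by
        apply Finset.sum_eq_zero
        intro j _
        simp [h j]
      rw [this, Real.sqrt_zero]
    have := key x hx
    rw [hz] at this
    linarith
  · have h0 : ψ x = 0 := hψ0 x hx
    obtain ⟨j, hj⟩ := hu x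
    exact ⟨j, by simpa [h0] using hj⟩
end

section
/- Let X be compact Hausdorff, A = C(X,𝕂), and (f,g) ∈ U_{n+1}(A) with g invertible (Z(g) = ∅). If tsr A ≤ n, then for every ε > 0 there exists y ∈ Aⁿ with ‖y_j‖_∞ ≤ ε such that f + y·g ∈ U_n(A). -/
/-- For `A = C(X, 𝕜)`, `X` compact Hausdorff: if `(f, g)` is an invertible `(n+1)`-tuple
with `g` invertible (`Z(g) = ∅`) and `tsr A ≤ n` (invertible `n`-tuples dense), then for
every `ε > 0` there is `y ∈ Aⁿ` with `‖y_j‖_∞ ≤ ε` such that `f + y·g` has no common zero. -/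
theorem stmt19 (𝕜 : Type*) [RCLike 𝕜] (X : Type*) [TopologicalSpace X] [CompactSpace X]
    [T2Space X] (n : ℕ)
    (htsr : Dense {f : Fin n → C(X, 𝕜) | ∀ x : X, ∃ j, f j x ≠ 0})
    (f : Fin n → C(X, 𝕜)) (g : C(X, 𝕜))
    (hg : ∀ x : X, g x ≠ 0)
    (hfg : ∀ x : X, (∃ j, f j x ≠ 0) ∨ g x ≠ 0)
    (ε : ℝ) (hε : 0 < ε) :
    ∃ y : Fin n → C(X, 𝕜), (∀ j, ‖y j‖ ≤ ε) ∧
      ∀ x : X, ∃ j, (f j + y j * g) x ≠ 0 := by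
  rcases isEmpty_or_nonempty X with hX | hX
  · exact ⟨0, fun j => by simpa using hε.le, fun x => (IsEmpty.false x).elim⟩
  · set ginv : C(X, 𝕜) := ⟨fun x => (g x)⁻¹, g.continuous.inv₀ hg⟩ with hginv
    obtain ⟨x₀⟩ := hX
    have hM : 0 < ‖ginv‖ := by
      have h1 : ‖ginv x₀‖ ≤ ‖ginv‖ := ginv.norm_coe_le_norm x₀
      have h2 : 0 < ‖ginv x₀‖ := by
        simp only [hginv, ContinuousMap.coe_mk, norm_pos_iff]
        exact inv_ne_zero (hg x₀)
      linarith
    have hδ : 0 < ε / ‖ginv‖ := div_pos hε hM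
    obtain ⟨v, hvb, hv⟩ := Metric.dense_iff.mp htsr f (ε / ‖ginv‖) hδ
    have hvd : dist f v < ε / ‖ginv‖ := by simpa [dist_comm] using Metric.mem_ball.mp hvb
    refine ⟨fun j => (v j - f j) * ginv, fun j => ?_, fun x => ?_⟩
    · have : ‖(v j - f j) * ginv‖ < ε := by
        calc ‖(v j - f j) * ginv‖ ≤ ‖v j - f j‖ * ‖ginv‖ := norm_mul_le _ _
          _ ≤ dist f v * ‖ginv‖ := by
              gcongr
              simpa [dist_eq_norm, norm_sub_rev] using dist_le_pi_dist f v j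
          _ < (ε / ‖ginv‖) * ‖ginv‖ := by gcongr
          _ = ε := div_mul_cancel₀ ε hM.ne'
      exact this.le
    · obtain ⟨j, hj⟩ := hv x
      refine ⟨j, ?_⟩
      have : (f j + (v j - f j) * ginv * g) x = v j x := by
        simp only [ContinuousMap.add_apply, ContinuousMap.mul_apply,
          ContinuousMap.sub_apply, hginv, ContinuousMap.coe_mk]
        have := hg x
        field_simp
        ring
      rw [this]; exact hj
end
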